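/- (Hellmann–Feynman theorem, variational form) Let H : ℝ → Matrix n n ℂ be a differentiable family of Hermitian matrices and ψ : ℝ → ℂⁿ a differentiable family of unit vectors such that for each a, ψ(a) is an eigenvector of H(a) with eigenvalue E(a) = ⟨ψ(a), H(a) ψ(a)⟩. Then dE/da(a) = ⟨ψ(a), (dH/da)(a) ψ(a)⟩. -/

import Mathlib

open Matrix Finset

/-- Hellmann–Feynman theorem: for a differentiable family of Hermitian
matrices `H a` with differentiable unit eigenvectors `ψ a`, the derivative of
the energy `E a = ⟨ψ a, H a (ψ a)⟩` is `⟨ψ a, H'(a) (ψ a)⟩`. -/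
theorem hellmann_feynman
    (n : Type*) [Fintype n] [DecidableEq n]
    (H : ℝ → Matrix n n ℂ) (ψ : ℝ → n → ℂ) (a₀ : ℝ)
    (hHdiff : ∀ i j, Differentiable ℝ (fun a => H a i j))
    (hψdiff : Differentiable ℝ ψ)
    (hherm : ∀ a, (H a).IsHermitian)
    (E : ℝ → ℂ)
    (hE : ∀ a, E a = dotProduct (star (ψ a)) ((H a).mulVec (ψ a)))
    (heig : ∀ a, (H a).mulVec (ψ a) = E a • ψ a)
    (hunit : ∀ a, dotProduct (star (ψ a)) (ψ a) = 1) :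
    deriv E a₀ =
      dotProduct (star (ψ a₀))
        (Matrix.mulVec (Matrix.of fun i j => deriv (fun a => H a i j) a₀) (ψ a₀)) := by
  classical
  set ψ' : n → ℂ := fun i => deriv (fun a => ψ a i) a₀ with hψ'def
  set H' : n → n → ℂ := fun i j => deriv (fun a => H a i j) a₀ with hH'def
  have hψd : ∀ i, HasDerivAt (fun a => ψ a i) (ψ' i) a₀ := by
    intro i
    have hd : DifferentiableAt ℝ (fun a => ψ a i) a₀ :=
      ((ContinuousLinearMap.proj (R := ℝ) (φ := fun _ : n => ℂ) i)).differentiable.comp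
        hψdiff a₀
    exact hd.hasDerivAt
  have hHd : ∀ i j, HasDerivAt (fun a => H a i j) (H' i j) a₀ :=
    fun i j => (hHdiff i j a₀).hasDerivAt
  -- E as a double sum
  have hEeq : E = fun a => ∑ i, ∑ j, star (ψ a i) * (H a i j * ψ a j) := by
    funext a
    rw [hE a]
    simp [dotProduct, mulVec, Finset.mul_sum]
  -- derivative of E
  have hED : HasDerivAt E
      (∑ i, ∑ j, (star (ψ' i) * (H a₀ i j * ψ a₀ j) +
        star (ψ a₀ i) * (H' i j * ψ a₀ j + H a₀ i j * ψ' j))) a₀ := by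
    rw [hEeq]
    refine HasDerivAt.fun_sum fun i _ => HasDerivAt.fun_sum fun j _ => ?_
    exact (hψd i).star.mul ((hHd i j).mul (hψd j))
  -- derivative of the norm is zero
  have hzero : ∑ i, (star (ψ' i) * ψ a₀ i + star (ψ a₀ i) * ψ' i) = 0 := by
    have hN : HasDerivAt (fun a => ∑ i, star (ψ a i) * ψ a i)
        (∑ i, (star (ψ' i) * ψ a₀ i + star (ψ a₀ i) * ψ' i)) a₀ :=
      HasDerivAt.fun_sum fun i _ => (hψd i).star.mul (hψd i)
    have hconst : (fun a => ∑ i, star (ψ a i) * ψ a i) = fun _ => (1 : ℂ) := by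
      funext a
      have := hunit a
      simpa [dotProduct] using this
    rw [hconst] at hN
    have := hN.deriv
    simpa using this.symm
  -- eigenvector relation componentwise
  have heigc : ∀ i, ∑ j, H a₀ i j * ψ a₀ j = E a₀ * ψ a₀ i := by
    intro i
    have := congrFun (heig a₀) i
    simpa [mulVec, dotProduct] using this
  -- hermitian entries
  have hHapp : ∀ i j, H a₀ i j = star (H a₀ j i) := fun i j => ((hherm a₀).apply i j).symm
  -- row identity
  have hrow : ∀ j, ∑ i, star (ψ a₀ i) * H a₀ i j = star (E a₀) * star (ψ a₀ j) := by
    intro j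
    have h1 : ∑ i, star (ψ a₀ i) * H a₀ i j = star (∑ i, H a₀ j i * ψ a₀ i) := by
      rw [star_sum]
      refine Finset.sum_congr rfl fun i _ => ?_
      rw [star_mul', hHapp i j]
      ring
    rw [h1, heigc j, star_mul']
  -- E is real (E = star E)
  have hEstar : E a₀ = star (E a₀) := by
    have h1 : E a₀ = ∑ j, (∑ i, star (ψ a₀ i) * H a₀ i j) * ψ a₀ j := by
      rw [congrFun hEeq a₀, Finset.sum_comm]
      refine Finset.sum_congr rfl fun j _ => ?_
      rw [Finset.sum_mul]
      refine Finset.sum_congr rfl fun i _ => ?_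
      ring
    have h2 : ∑ j, star (ψ a₀ j) * ψ a₀ j = 1 := by
      have := hunit a₀
      simpa [dotProduct] using this
    calc E a₀ = ∑ j, (∑ i, star (ψ a₀ i) * H a₀ i j) * ψ a₀ j := h1
      _ = ∑ j, star (E a₀) * (star (ψ a₀ j) * ψ a₀ j) := by
          refine Finset.sum_congr rfl fun j _ => ?_
          rw [hrow j]; ring
      _ = star (E a₀) * ∑ j, star (ψ a₀ j) * ψ a₀ j := by rw [Finset.mul_sum]
      _ = star (E a₀) := by rw [h2, mul_one]
  -- the three pieces
  have hT1 : ∑ i, ∑ j, star (ψ' i) * (H a₀ i j * ψ a₀ j)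
      = E a₀ * ∑ i, star (ψ' i) * ψ a₀ i := by
    rw [Finset.mul_sum]
    refine Finset.sum_congr rfl fun i _ => ?_
    rw [← Finset.mul_sum, heigc i]
    ring
  have hT3 : ∑ i, ∑ j, star (ψ a₀ i) * (H a₀ i j * ψ' j)
      = E a₀ * ∑ j, star (ψ a₀ j) * ψ' j := by
    rw [Finset.sum_comm, Finset.mul_sum]
    refine Finset.sum_congr rfl fun j _ => ?_
    have h1 : ∑ i, star (ψ a₀ i) * (H a₀ i j * ψ' j)
        = (∑ i, star (ψ a₀ i) * H a₀ i j) * ψ' j := by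
      rw [Finset.sum_mul]
      refine Finset.sum_congr rfl fun i _ => ?_
      ring
    rw [h1, hrow j, ← hEstar]
    ring
  have hT2 : dotProduct (star (ψ a₀))
      (Matrix.mulVec (Matrix.of fun i j => deriv (fun a => H a i j) a₀) (ψ a₀))
      = ∑ i, ∑ j, star (ψ a₀ i) * (H' i j * ψ a₀ j) := by
    simp [dotProduct, mulVec, Finset.mul_sum, hH'def]
  -- assemble
  rw [hED.deriv, hT2]
  have hsplit : ∑ i, ∑ j, (star (ψ' i) * (H a₀ i j * ψ a₀ j) +
        star (ψ a₀ i) * (H' i j * ψ a₀ j + H a₀ i j * ψ' j))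
      = (∑ i, ∑ j, star (ψ' i) * (H a₀ i j * ψ a₀ j))
        + (∑ i, ∑ j, star (ψ a₀ i) * (H' i j * ψ a₀ j))
        + (∑ i, ∑ j, star (ψ a₀ i) * (H a₀ i j * ψ' j)) := by
    simp only [mul_add, Finset.sum_add_distrib]
    ring
  rw [hsplit, hT1, hT3]
  have hz2 : ∑ i, star (ψ' i) * ψ a₀ i + ∑ i, star (ψ a₀ i) * ψ' i = 0 := by
    rw [← Finset.sum_add_distrib]
    exact hzero
  have : E a₀ * (∑ i, star (ψ' i) * ψ a₀ i) + E a₀ * (∑ i, star (ψ a₀ i) * ψ' i) = 0 := by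
    rw [← mul_add, hz2, mul_zero]
  linear_combination this
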